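/- Every ordered field F in which every nonempty bounded subset definable with parameters (in the language of ordered fields) has a least upper bound is a real closed field; in particular, every nonnegative element of F has a square root in F, and every odd-degree polynomial over F has a root in F. -/

import Mathlib

open FirstOrder

/-- The language of ordered fields: the language of rings together with the order relation. -/
def orderedFieldLang : FirstOrder.Language := Language.ring.sum Language.order

/-- The natural interpretation of the language of ordered fields in a linear ordered field. -/
noncomputable def orderedFieldStructure (F : Type*) [Field F] [LinearOrder F] [IsStrictOrderedRing F] :
    orderedFieldLang.Structure F :=
  letI : Language.ring.Structure F := (Ring.compatibleRingOfRing F).toStructure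
  letI : Language.order.Structure F := Language.orderStructure F
  inferInstanceAs ((Language.ring.sum Language.order).Structure F)

namespace DefSupRC

open FirstOrder Language Polynomial

variable {F : Type*} [Field F] [LinearOrder F] [IsStrictOrderedRing F]

attribute [local instance] FirstOrder.Ring.compatibleRingOfRing

noncomputable local instance : Language.order.Structure F := Language.orderStructure F

noncomputable local instance : orderedFieldLang.Structure F :=
  inferInstanceAs ((Language.ring.sum Language.order).Structure F)

local instance : IsOrdered orderedFieldLang :=
  inferInstanceAs (IsOrdered (Language.ring.sum Language.order))

local instance : orderedFieldLang.OrderedStructure F := ⟨fun _ => Iff.rfl⟩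

/-- The free-commutative-ring avatar of a polynomial, with the coefficients as
parameters and one variable. -/
noncomputable def fcr (p : Polynomial F) :
    FreeCommRing (↥(Set.univ : Set F) ⊕ Fin 1) :=
  ∑ i ∈ Finset.range (p.natDegree + 1),
    FreeCommRing.of (Sum.inl ⟨p.coeff i, trivial⟩) * FreeCommRing.of (Sum.inr 0) ^ i

lemma lift_fcr (p : Polynomial F) (v : (↥(Set.univ : Set F) ⊕ Fin 1) → F)
    (hv : ∀ a : ↥(Set.univ : Set F), v (Sum.inl a) = (a : F)) :
    FreeCommRing.lift v (fcr p) = p.eval (v (Sum.inr 0)) := by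
  rw [fcr, map_sum, Polynomial.eval_eq_sum_range]
  refine Finset.sum_congr rfl (fun i _ => ?_)
  rw [map_mul, map_pow, FreeCommRing.lift_of, FreeCommRing.lift_of, hv]

lemma definable_le (p q : Polynomial F) :
    Set.Definable₁ (Set.univ : Set F) orderedFieldLang {x : F | p.eval x ≤ q.eval x} := by
  rw [Set.Definable₁, Set.definable_iff_exists_formula_sum]
  refine ⟨Term.le
    ((LHom.sumInl.onTerm (Ring.termOfFreeCommRing (fcr p))).relabel Sum.inl)
    ((LHom.sumInl.onTerm (Ring.termOfFreeCommRing (fcr q))).relabel Sum.inl), ?_⟩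
  ext v
  simp only [Set.mem_setOf_eq, Formula.Realize, Term.realize_le, Term.realize_relabel,
    LHom.realize_onTerm, Ring.realize_termOfFreeCommRing]
  change _ ↔ @Term.realize (Language.ring.sum Language.order) F _ _ _
      ((LHom.sumInl.onTerm (Ring.termOfFreeCommRing (fcr p))).relabel Sum.inl) ≤
    @Term.realize (Language.ring.sum Language.order) F _ _ _
      ((LHom.sumInl.onTerm (Ring.termOfFreeCommRing (fcr q))).relabel Sum.inl)
  simp only [Term.realize_relabel, LHom.realize_onTerm, Ring.realize_termOfFreeCommRing]
  rw [lift_fcr, lift_fcr] <;> simp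

open Polynomial


/-- Algebraic ε-δ continuity at a point. -/
def ContAt (f : F → F) (u : F) : Prop :=
  ∀ ε : F, 0 < ε → ∃ δ : F, 0 < δ ∧ ∀ y : F, |y - u| < δ → |f y - f u| < ε

lemma contAt_const (c u : F) : ContAt (fun _ => c) u :=
  fun ε hε => ⟨1, one_pos, fun _ _ => by simpa using hε⟩

lemma contAt_id (u : F) : ContAt (fun y => y) u :=
  fun ε hε => ⟨ε, hε, fun y hy => hy⟩

lemma contAt_add {f g : F → F} {u : F} (hf : ContAt f u) (hg : ContAt g u) :
    ContAt (fun y => f y + g y) u := by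
  intro ε hε
  obtain ⟨δ₁, hδ₁, h₁⟩ := hf (ε / 2) (by positivity)
  obtain ⟨δ₂, hδ₂, h₂⟩ := hg (ε / 2) (by positivity)
  refine ⟨min δ₁ δ₂, lt_min hδ₁ hδ₂, fun y hy => ?_⟩
  have e1 := h₁ y (lt_of_lt_of_le hy (min_le_left _ _))
  have e2 := h₂ y (lt_of_lt_of_le hy (min_le_right _ _))
  calc |f y + g y - (f u + g u)| = |(f y - f u) + (g y - g u)| := by ring_nf
    _ ≤ |f y - f u| + |g y - g u| := abs_add_le _ _
    _ < ε / 2 + ε / 2 := add_lt_add e1 e2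
    _ = ε := by ring

lemma contAt_mul {f g : F → F} {u : F} (hf : ContAt f u) (hg : ContAt g u) :
    ContAt (fun y => f y * g y) u := by
  intro ε hε
  obtain ⟨δ₁, hδ₁, h₁⟩ := hf 1 one_pos
  have hA : (0:F) < |f u| + 1 := by positivity
  have hB : (0:F) < |g u| + 1 := by positivity
  obtain ⟨δ₂, hδ₂, h₂⟩ := hg (ε / (2 * (|f u| + 1))) (by positivity)
  obtain ⟨δ₃, hδ₃, h₃⟩ := hf (ε / (2 * (|g u| + 1))) (by positivity)
  refine ⟨min δ₁ (min δ₂ δ₃), lt_min hδ₁ (lt_min hδ₂ hδ₃), fun y hy => ?_⟩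
  have e1 := h₁ y (lt_of_lt_of_le hy (min_le_left _ _))
  have e2 := h₂ y (lt_of_lt_of_le hy ((min_le_right _ _).trans (min_le_left _ _)))
  have e3 := h₃ y (lt_of_lt_of_le hy ((min_le_right _ _).trans (min_le_right _ _)))
  have hfy : |f y| < |f u| + 1 := by
    have := abs_sub_abs_le_abs_sub (f y) (f u)
    linarith
  have key1 : |f y| * |g y - g u| < ε / 2 := by
    calc |f y| * |g y - g u| ≤ (|f u| + 1) * |g y - g u| :=
          mul_le_mul_of_nonneg_right hfy.le (abs_nonneg _)
      _ < (|f u| + 1) * (ε / (2 * (|f u| + 1))) := by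
          exact mul_lt_mul_of_pos_left e2 hA
      _ = ε / 2 := by field_simp
  have key2 : |g u| * |f y - f u| < ε / 2 := by
    calc |g u| * |f y - f u| ≤ (|g u| + 1) * |f y - f u| :=
          mul_le_mul_of_nonneg_right (by linarith) (abs_nonneg _)
      _ < (|g u| + 1) * (ε / (2 * (|g u| + 1))) := mul_lt_mul_of_pos_left e3 hB
      _ = ε / 2 := by field_simp
  calc |f y * g y - f u * g u| = |f y * (g y - g u) + g u * (f y - f u)| := by ring_nf
    _ ≤ |f y * (g y - g u)| + |g u * (f y - f u)| := abs_add_le _ _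
    _ = |f y| * |g y - g u| + |g u| * |f y - f u| := by rw [abs_mul, abs_mul]
    _ < ε / 2 + ε / 2 := add_lt_add key1 key2
    _ = ε := by ring

lemma contAt_eval (p : Polynomial F) (u : F) : ContAt (fun y => p.eval y) u := by
  induction p using Polynomial.induction_on with
  | C a => simpa using contAt_const a u
  | add p q hp hq => simpa using contAt_add hp hq
  | monomial n a h =>
      have : (fun y => (C a * X ^ (n + 1)).eval y) = fun y => (C a * X ^ n).eval y * y := by
        funext y; simp [pow_succ]; ring
      rw [this]
      exact contAt_mul h (contAt_id u)

lemma root_of_isLUB (p : Polynomial F) (u : F) (hu : IsLUB {y : F | p.eval y ≤ 0} u) :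
    p.eval u = 0 := by
  rcases lt_trichotomy (p.eval u) 0 with h | h | h
  · obtain ⟨δ, hδ, hc⟩ := contAt_eval p u (-(p.eval u)) (by linarith)
    have h1 : |p.eval (u + δ / 2) - p.eval u| < -(p.eval u) := by
      apply hc
      rw [add_sub_cancel_left, abs_of_pos (by positivity)]
      linarith
    have h2 := (abs_lt.1 h1).2
    have hmem : u + δ / 2 ∈ {y : F | p.eval y ≤ 0} := by
      simp only [Set.mem_setOf_eq]; linarith
    have := hu.1 hmem
    linarith
  · exact h
  · obtain ⟨δ, hδ, hc⟩ := contAt_eval p u (p.eval u) h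
    obtain ⟨z, hz, hz2⟩ : ∃ z ∈ {y : F | p.eval y ≤ 0}, u - δ < z := by
      by_contra hcon
      push_neg at hcon
      have : u ≤ u - δ := hu.2 hcon
      linarith
    have hzu : z ≤ u := hu.1 hz
    have h1 : |p.eval z - p.eval u| < p.eval u := by
      apply hc
      rw [abs_lt]; constructor <;> linarith
    have h2 := (abs_lt.1 h1).1
    simp only [Set.mem_setOf_eq] at hz
    linarith

lemma eval_bounds (q : Polynomial F) (hodd : Odd q.natDegree)
    (hlc : 0 < q.coeff q.natDegree) (y : F) (hy1 : 1 ≤ y)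
    (hyB : (∑ i ∈ Finset.range q.natDegree, |q.coeff i|) < q.coeff q.natDegree * y) :
    0 < q.eval y ∧ q.eval (-y) < 0 := by
  obtain ⟨m, hm⟩ : ∃ m, q.natDegree = m + 1 :=
    ⟨q.natDegree - 1, (Nat.succ_pred_eq_of_pos hodd.pos).symm⟩
  have hy0 : (0:F) < y := lt_of_lt_of_le one_pos hy1
  have hym : (0:F) < y ^ m := pow_pos hy0 m
  have habs : ∀ x : F, |x| = y → |∑ i ∈ Finset.range q.natDegree, q.coeff i * x ^ i| ≤ (∑ i ∈ Finset.range q.natDegree, |q.coeff i|) * y ^ m := by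
    intro x hx
    calc |∑ i ∈ Finset.range q.natDegree, q.coeff i * x ^ i|
        ≤ ∑ i ∈ Finset.range q.natDegree, |q.coeff i * x ^ i| := Finset.abs_sum_le_sum_abs _ _
      _ ≤ ∑ i ∈ Finset.range q.natDegree, |q.coeff i| * y ^ m := by
          refine Finset.sum_le_sum (fun i hi => ?_)
          rw [abs_mul, abs_pow, hx]
          have hi' : i ≤ m := by have := Finset.mem_range.1 hi; omega
          exact mul_le_mul_of_nonneg_left (pow_le_pow_right₀ hy1 hi') (abs_nonneg _)
      _ = (∑ i ∈ Finset.range q.natDegree, |q.coeff i|) * y ^ m := (Finset.sum_mul ..).symm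
  have heval : ∀ x : F, q.eval x =
      (∑ i ∈ Finset.range q.natDegree, q.coeff i * x ^ i) + q.coeff q.natDegree * x ^ q.natDegree := by
    intro x
    rw [Polynomial.eval_eq_sum_range, Finset.sum_range_succ]
  have hxn : (-y) ^ q.natDegree = -(y ^ q.natDegree) := hodd.neg_pow y
  have hyn : y ^ q.natDegree = y ^ m * y := by rw [hm, pow_succ]
  constructor
  · have h1 := habs y (abs_of_pos hy0)
    have h2 := (abs_le.1 h1).1
    rw [heval y]
    nlinarith [mul_lt_mul_of_pos_right hyB hym]
  · have h1 := habs (-y) (by rw [abs_neg, abs_of_pos hy0])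
    have h2 := (abs_le.1 h1).2
    rw [heval (-y), hxn]
    nlinarith [mul_lt_mul_of_pos_right hyB hym]


lemma definable_le_zero (p : Polynomial F) :
    (letI := orderedFieldStructure F
     Set.Definable₁ (Set.univ : Set F) orderedFieldLang {x : F | p.eval x ≤ 0}) := by
  have h : {x : F | p.eval x ≤ 0} = {x : F | p.eval x ≤ (0 : Polynomial F).eval x} := by simp
  rw [h]
  exact definable_le p 0

end DefSupRC

/-- An ordered field in which every nonempty bounded-above subset definable with
parameters in the language of ordered fields has a least upper bound is real closed:
every nonnegative element has a square root and every polynomial of odd degree has a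
root. -/
theorem definable_sup_implies_real_closed (F : Type*) [Field F] [LinearOrder F] [IsStrictOrderedRing F]
    (hsup : ∀ s : Set F,
      (letI := orderedFieldStructure F
       Set.Definable₁ (Set.univ : Set F) orderedFieldLang s) →
      s.Nonempty → BddAbove s → ∃ u : F, IsLUB s u) :
    (∀ x : F, 0 ≤ x → ∃ y : F, y ^ 2 = x) ∧
    (∀ p : Polynomial F, Odd p.natDegree → ∃ x : F, p.IsRoot x) := by
  open Polynomial in
  have key : ∀ q : Polynomial F, Odd q.natDegree → 0 < q.leadingCoeff →
      ∃ u : F, q.eval u = 0 := by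
    intro q hoddq hlcq
    have hcoeff : 0 < q.coeff q.natDegree := by
      rwa [Polynomial.coeff_natDegree]
    set B := ∑ i ∈ Finset.range q.natDegree, |q.coeff i| with hB
    set y₀ : F := max 1 ((B + 1) / q.coeff q.natDegree) with hy₀
    have hy1 : (1 : F) ≤ y₀ := le_max_left _ _
    have hyB : B < q.coeff q.natDegree * y₀ := by
      have h1 : (B + 1) / q.coeff q.natDegree ≤ y₀ := le_max_right _ _
      have h2 := mul_le_mul_of_nonneg_left h1 hcoeff.le
      rw [mul_div_cancel₀ _ (ne_of_gt hcoeff)] at h2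
      linarith
    have hb := DefSupRC.eval_bounds q hoddq hcoeff
    have hne : {y : F | q.eval y ≤ 0}.Nonempty := ⟨-y₀, le_of_lt (hb y₀ hy1 hyB).2⟩
    have hbdd : BddAbove {y : F | q.eval y ≤ 0} := by
      refine ⟨y₀, fun z hz => ?_⟩
      by_contra hzy
      push_neg at hzy
      have h1 : (1 : F) ≤ z := hy1.trans hzy.le
      have hyB' : B < q.coeff q.natDegree * z :=
        lt_of_lt_of_le hyB (mul_le_mul_of_nonneg_left hzy.le hcoeff.le)
      have := (hb z h1 hyB').1
      simp only [Set.mem_setOf_eq] at hz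
      linarith
    obtain ⟨u, hu⟩ := hsup _ (DefSupRC.definable_le_zero q) hne hbdd
    exact ⟨u, DefSupRC.root_of_isLUB q u hu⟩
  constructor
  · intro x hx
    set p : Polynomial F := X ^ 2 - C x with hp
    have hne : {y : F | p.eval y ≤ 0}.Nonempty := by
      refine ⟨0, ?_⟩
      simp only [Set.mem_setOf_eq, hp, eval_sub, eval_pow, eval_X, eval_C]
      nlinarith
    have hbdd : BddAbove {y : F | p.eval y ≤ 0} := by
      refine ⟨x + 1, fun y hy => ?_⟩
      simp only [Set.mem_setOf_eq, hp, eval_sub, eval_pow, eval_X, eval_C] at hy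
      nlinarith
    obtain ⟨u, hu⟩ := hsup _ (DefSupRC.definable_le_zero p) hne hbdd
    have hr := DefSupRC.root_of_isLUB p u hu
    simp only [hp, eval_sub, eval_pow, eval_X, eval_C] at hr
    exact ⟨u, by linarith⟩
  · intro p hodd
    have hp0 : p ≠ 0 := by
      intro h
      rw [h] at hodd
      simp at hodd
    have hlc : p.leadingCoeff ≠ 0 := Polynomial.leadingCoeff_ne_zero.2 hp0
    rcases hlc.lt_or_gt with hneg | hpos
    · obtain ⟨u, hu⟩ := key (-p) (by simpa using hodd)
        (by rw [Polynomial.leadingCoeff_neg]; linarith)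
      refine ⟨u, ?_⟩
      simp only [Polynomial.eval_neg, neg_eq_zero] at hu
      exact hu
    · obtain ⟨u, hu⟩ := key p hodd hpos
      exact ⟨u, hu⟩
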